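/- In a finite nilpotent group G, for every irreducible character χ and every g ∈ G, |χ(g)| = 1 implies χ(1) = 1 (i.e., nilpotent groups are circle-avoiding). -/

import Mathlib

open CategoryTheory LinearMap Module Polynomial Finset
noncomputable section
namespace CircleAvoid


lemma natCast_isIntegral (k : ℕ) : IsIntegral ℤ ((k : ℂ)) := by
  have : IsIntegral ℤ (algebraMap ℤ ℂ (k : ℤ)) := isIntegral_algebraMap
  simpa using this

lemma isNilpotent_pow_sub {A : Type*} [Ring A] [Algebra ℂ A] (x : A) (μ : ℂ)
    (h : IsNilpotent (x - algebraMap ℂ A μ)) (j : ℕ) :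
    IsNilpotent (x ^ j - algebraMap ℂ A (μ ^ j)) := by
  obtain ⟨q, hq⟩ : (X - C μ) ∣ (X ^ j - C (μ ^ j)) := by
    simpa [C_pow] using sub_dvd_pow_sub_pow (X : ℂ[X]) (C μ) j
  have h2 : x ^ j - algebraMap ℂ A (μ ^ j) = (x - algebraMap ℂ A μ) * (aeval x q) := by
    have := congrArg (aeval x) hq
    simpa [map_sub, map_mul, aeval_X, aeval_C, map_pow] using this
  rw [h2]
  refine Commute.isNilpotent_mul_right ?_ h
  have hx : (x - algebraMap ℂ A μ) = aeval x (X - C μ) := by simp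
  rw [hx]
  calc aeval x (X - C μ) * aeval x q = aeval x ((X - C μ) * q) := (map_mul _ _ _).symm
    _ = aeval x (q * (X - C μ)) := by rw [mul_comm]
    _ = aeval x q * aeval x (X - C μ) := map_mul _ _ _

variable {M : Type} [AddCommGroup M] [Module ℂ M] [FiniteDimensional ℂ M]

lemma mapsTo_pow (f : Module.End ℂ M) {W : Submodule ℂ M} (h : Set.MapsTo f W W) (k : ℕ) :
    Set.MapsTo (f ^ k) W W := by
  induction k with
  | zero => intro x hx; simpa using hx
  | succ k ih =>
      intro x hx
      have : (f ^ (k + 1)) x = f ((f ^ k) x) := by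
        rw [pow_succ']; exact Module.End.mul_apply f (f ^ k) x
      rw [this]
      exact h (ih hx)

lemma coe_restrict_pow (f : Module.End ℂ M) {W : Submodule ℂ M} (h : Set.MapsTo f W W) (k : ℕ)
    (x : W) : (((f.restrict h) ^ k) x : M) = (f ^ k) (x : M) := by
  induction k with
  | zero => rfl
  | succ k ih =>
      have h1 : ((f.restrict h) ^ (k+1)) x = (f.restrict h) (((f.restrict h) ^ k) x) := by
        rw [pow_succ']; exact Module.End.mul_apply _ _ x
      have h2 : (f ^ (k+1)) (x : M) = f ((f ^ k) (x : M)) := by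
        rw [pow_succ']; exact Module.End.mul_apply _ _ _
      rw [h1, h2, ← ih]
      rfl

lemma restrict_pow (f : Module.End ℂ M) {W : Submodule ℂ M} (h : Set.MapsTo f W W) (k : ℕ)
    (h' : Set.MapsTo (f ^ k) W W) :
    (f ^ k).restrict h' = (f.restrict h) ^ k := by
  ext x
  exact (coe_restrict_pow f h k x).symm

lemma restrict_pow_eq_one (f : Module.End ℂ M) {W : Submodule ℂ M} (h : Set.MapsTo f W W)
    {k : ℕ} (hf : f ^ k = 1) : (f.restrict h) ^ k = 1 := by
  ext x
  rw [coe_restrict_pow f h k x, hf]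
  rfl

lemma nilpotent_restrict_sub (B : Module.End ℂ M) (μ : ℂ)
    (h : Set.MapsTo B (B.maxGenEigenspace μ) (B.maxGenEigenspace μ)) :
    IsNilpotent (B.restrict h - algebraMap ℂ (Module.End ℂ (B.maxGenEigenspace μ)) μ) := by
  have hsub : Set.MapsTo (B - algebraMap ℂ (Module.End ℂ M) μ)
      (B.maxGenEigenspace μ) (B.maxGenEigenspace μ) := fun x hx => by
    have : (B - algebraMap ℂ (Module.End ℂ M) μ) x = B x - μ • x := by
      simp [Algebra.algebraMap_eq_smul_one]
    rw [this]
    exact Submodule.sub_mem _ (h hx) (Submodule.smul_mem _ _ hx)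
  have h0 : IsNilpotent ((B - algebraMap ℂ (Module.End ℂ M) μ).restrict hsub) :=
    B.isNilpotent_restrict_maxGenEigenspace_sub_algebraMap μ
  have key : (B - algebraMap ℂ (Module.End ℂ M) μ).restrict hsub
      = B.restrict h - algebraMap ℂ (Module.End ℂ (B.maxGenEigenspace μ)) μ := by
    ext x
    simp [LinearMap.restrict_apply, Algebra.algebraMap_eq_smul_one]
    rfl
  rwa [key] at h0

lemma scalar_eq_of_nilpotent {W : Submodule ℂ M} [Nontrivial W] (c : ℂ)
    (h : IsNilpotent (c • (1 : Module.End ℂ W))) : c = 0 := by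
  obtain ⟨k, hk⟩ := h
  obtain ⟨w, hw⟩ := exists_ne (0 : W)
  have h4 : (c ^ k) • (1 : Module.End ℂ W) = 0 := by rw [← hk, _root_.smul_pow, one_pow]
  have h5 : c ^ k • w = 0 := by
    have := congrArg (fun f : Module.End ℂ W => f w) h4
    simpa using this
  rcases smul_eq_zero.mp h5 with hc | hc
  · rcases Nat.eq_zero_or_pos k with rfl | hk'
    · simp at hc
    · exact pow_eq_zero_iff hk'.ne' |>.mp hc
  · exact absurd hc hw

lemma eigenvalue_pow_eq_one (A : Module.End ℂ M) {n : ℕ} (hA : A ^ n = 1) {μ : ℂ}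
    (hW : A.maxGenEigenspace μ ≠ ⊥) : μ ^ n = 1 := by
  have : Nontrivial (A.maxGenEigenspace μ) := Submodule.nontrivial_iff_ne_bot.mpr hW
  have hmaps : Set.MapsTo A (A.maxGenEigenspace μ) (A.maxGenEigenspace μ) :=
    A.mapsTo_maxGenEigenspace_of_comm rfl μ
  have h2 : IsNilpotent ((A.restrict hmaps) ^ n
      - algebraMap ℂ (Module.End ℂ (A.maxGenEigenspace μ)) (μ ^ n)) :=
    isNilpotent_pow_sub _ μ (nilpotent_restrict_sub A μ hmaps) n
  rw [restrict_pow_eq_one A hmaps hA] at h2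
  have h3 : IsNilpotent ((1 - μ ^ n) • (1 : Module.End ℂ (A.maxGenEigenspace μ))) := by
    have : (1 : Module.End ℂ (A.maxGenEigenspace μ))
        - algebraMap ℂ (Module.End ℂ (A.maxGenEigenspace μ)) (μ ^ n) = (1 - μ ^ n) • 1 := by
      ext x
      simp [Algebra.algebraMap_eq_smul_one, sub_smul]
    rwa [this] at h2
  have := scalar_eq_of_nilpotent _ h3
  linear_combination -this

/-- Trace of a finite-order endomorphism is an algebraic integer. -/
lemma trace_isIntegral (B : Module.End ℂ M) {r : ℕ} (hr : 0 < r) (hB : B ^ r = 1) :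
    IsIntegral ℤ (LinearMap.trace ℂ M B) := by
  classical
  have hds := DirectSum.isInternal_submodule_of_iSupIndep_of_iSup_eq_top
    B.independent_maxGenEigenspace B.iSup_maxGenEigenspace_eq_top
  have h_fin : {μ | B.maxGenEigenspace μ ≠ ⊥}.Finite :=
    WellFoundedGT.finite_ne_bot_of_iSupIndep B.independent_maxGenEigenspace
  have hmaps : ∀ μ : ℂ, Set.MapsTo B (B.maxGenEigenspace μ) (B.maxGenEigenspace μ) :=
    fun μ => B.mapsTo_maxGenEigenspace_of_comm rfl μ
  rw [trace_eq_sum_trace_restrict' hds h_fin hmaps]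
  refine IsIntegral.sum _ (fun μ hμ => ?_)
  have hnil := nilpotent_restrict_sub B μ (hmaps μ)
  have htr : LinearMap.trace ℂ _ (B.restrict (hmaps μ))
      = μ * (finrank ℂ (B.maxGenEigenspace μ) : ℂ) := by
    have h1 := trace_comp_eq_mul_of_commute_of_isNilpotent (R := ℂ)
      (M := B.maxGenEigenspace μ) (f := 1) μ (Commute.one_left _) hnil
    simp at h1
    exact h1
  rw [htr]
  have hWne : B.maxGenEigenspace μ ≠ ⊥ := by simpa using hμ
  have hμr : μ ^ r = 1 := eigenvalue_pow_eq_one B hB hWne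
  refine IsIntegral.mul ⟨X ^ r - 1, monic_X_pow_sub_C 1 hr.ne', ?_⟩ (natCast_isIntegral _)
  simp [eval₂_sub, hμr]

/-- Master decomposition: traces of `A ^ j * B` for commuting finite-order `A`, `B`. -/
lemma master (A B : Module.End ℂ M) (hc : Commute A B) {n : ℕ} (hA : A ^ n = 1) :
    ∃ (s : Finset ℂ) (t : ℂ → ℂ),
      (∀ μ ∈ s, μ ^ n = 1) ∧
      (∀ r : ℕ, 0 < r → B ^ r = 1 → ∀ μ ∈ s, IsIntegral ℤ (t μ)) ∧
      (B = 1 → ∀ μ ∈ s, ∃ k : ℕ, t μ = (k : ℂ)) ∧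
      (∀ j : ℕ, LinearMap.trace ℂ M (A ^ j * B) = ∑ μ ∈ s, μ ^ j * t μ) := by
  classical
  have hds := DirectSum.isInternal_submodule_of_iSupIndep_of_iSup_eq_top
    A.independent_maxGenEigenspace A.iSup_maxGenEigenspace_eq_top
  have h_fin : {μ | A.maxGenEigenspace μ ≠ ⊥}.Finite :=
    WellFoundedGT.finite_ne_bot_of_iSupIndep A.independent_maxGenEigenspace
  have hmapsA : ∀ μ : ℂ, Set.MapsTo A (A.maxGenEigenspace μ) (A.maxGenEigenspace μ) :=
    fun μ => A.mapsTo_maxGenEigenspace_of_comm rfl μ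
  have hmapsB : ∀ μ : ℂ, Set.MapsTo B (A.maxGenEigenspace μ) (A.maxGenEigenspace μ) :=
    fun μ => A.mapsTo_maxGenEigenspace_of_comm hc μ
  refine ⟨h_fin.toFinset, fun μ => LinearMap.trace ℂ _ (B.restrict (hmapsB μ)), ?_, ?_, ?_, ?_⟩
  · intro μ hμ
    exact eigenvalue_pow_eq_one A hA (by simpa using hμ)
  · intro r hr hB μ hμ
    exact trace_isIntegral _ hr (restrict_pow_eq_one B (hmapsB μ) hB)
  · rintro rfl μ hμ
    refine ⟨finrank ℂ (A.maxGenEigenspace μ), ?_⟩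
    have h1 : (1 : Module.End ℂ M).restrict (hmapsB μ) = 1 := by ext x; rfl
    dsimp only
    rw [h1, trace_one]
  · intro j
    have hmapsAjB : ∀ μ : ℂ,
        Set.MapsTo (A ^ j * B) (A.maxGenEigenspace μ) (A.maxGenEigenspace μ) :=
      fun μ => A.mapsTo_maxGenEigenspace_of_comm
        (Commute.mul_right (Commute.pow_right rfl j) hc) μ
    rw [trace_eq_sum_trace_restrict' hds h_fin hmapsAjB]
    refine Finset.sum_congr rfl (fun μ hμ => ?_)
    have hmapsAj := mapsTo_pow A (hmapsA μ) j
    have hAB : A ^ j * B = B * (A ^ j) := (hc.pow_left j).eq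
    have h1 : (A ^ j * B).restrict (hmapsAjB μ)
        = (B.restrict (hmapsB μ)) ∘ₗ ((A ^ j).restrict hmapsAj) := by
      refine LinearMap.ext fun x => Subtype.ext ?_
      simp [LinearMap.restrict_coe_apply, LinearMap.comp_apply, hAB, Module.End.mul_apply]
      rfl
    rw [h1]
    have hnilj : IsNilpotent ((A ^ j).restrict hmapsAj
        - algebraMap ℂ (Module.End ℂ (A.maxGenEigenspace μ)) (μ ^ j)) := by
      have h3 := isNilpotent_pow_sub (A.restrict (hmapsA μ)) μ
        (nilpotent_restrict_sub A μ (hmapsA μ)) j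
      rwa [← restrict_pow A (hmapsA μ) j hmapsAj] at h3
    have hcomm' : Commute (B.restrict (hmapsB μ)) ((A ^ j).restrict hmapsAj) :=
      LinearMap.restrict_commute ((hc.pow_left j).symm) _ _
    rw [trace_comp_eq_mul_of_commute_of_isNilpotent (μ ^ j) hcomm' hnilj]



lemma eval_charpoly' {κ : Type} [Fintype κ] [DecidableEq κ] (N : Matrix κ κ ℂ) (t : ℂ) :
    N.charpoly.eval t = (t • (1 : Matrix κ κ ℂ) - N).det := by
  rw [Matrix.charpoly, ← Polynomial.coe_evalRingHom, RingHom.map_det]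
  congr 1
  ext i j
  by_cases h : i = j
  · subst h
    simp [Matrix.charmatrix_apply_eq, Matrix.one_apply]
  · simp [Matrix.charmatrix_apply_ne _ _ _ h, Matrix.one_apply, h]

variable {G : Type} [Group G] [Fintype G]

lemma schur_scalar (V : FDRep ℂ G) [Simple V] (f : Module.End ℂ V)
    (hf : ∀ g : G, V.ρ g * f = f * V.ρ g) : ∃ c : ℂ, f = c • (1 : Module.End ℂ V) := by
  let φ : V ⟶ V := ⟨FGModuleCat.ofHom f, by intro g; ext x; exact LinearMap.congr_fun (hf g).symm x⟩
  obtain ⟨c, hc⟩ := endomorphism_simple_eq_smul_id ℂ φ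
  exact ⟨c, by have := congrArg (fun ψ : V ⟶ V => ψ.hom.hom.hom) hc; exact this.symm⟩

/-- The class-sum scalar: `|C_b| * χ(b) = λ * dim` with `λ` an algebraic integer. -/
lemma class_sum_scalar (V : FDRep ℂ G) [Simple V] (hd : (finrank ℂ V : ℂ) ≠ 0) (b : G) :
    ∃ lam : ℂ, IsIntegral ℤ lam ∧
      (((Set.toFinite (ConjClasses.mk b).carrier).toFinset.card : ℂ)) * V.character b
        = lam * (finrank ℂ V : ℂ) := by
  classical
  letI : Fintype (ConjClasses G) := Fintype.ofFinite _
  set κ := ConjClasses G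
  let F : κ → Finset G := fun c => (Set.toFinite c.carrier).toFinset
  have hmemF : ∀ (c : κ) (x : G), x ∈ F c ↔ ConjClasses.mk x = c := by
    intro c x
    simp only [F, Set.Finite.mem_toFinset]
    exact ConjClasses.mem_carrier_iff_mk_eq
  have hconjF : ∀ (c : κ) (u x : G), x ∈ F c → u * x * u⁻¹ ∈ F c := by
    intro c u x hx
    rw [hmemF] at hx ⊢
    rw [← hx, ConjClasses.mk_eq_mk_iff_isConj]
    exact (isConj_iff.mpr ⟨u, rfl⟩).symm
  let T : κ → Module.End ℂ V := fun c => ∑ x ∈ F c, V.ρ x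
  -- equivariance
  have hequiv : ∀ (c : κ) (u : G), V.ρ u * T c = T c * V.ρ u := by
    intro c u
    have h1 : V.ρ u * T c = ∑ x ∈ F c, V.ρ (u * x) := by
      simp only [T, Finset.mul_sum, ← map_mul]
    have h2 : T c * V.ρ u = ∑ x ∈ F c, V.ρ (x * u) := by
      simp only [T, Finset.sum_mul, ← map_mul]
    rw [h1, h2]
    refine Finset.sum_nbij' (fun x => u * x * u⁻¹) (fun x => u⁻¹ * x * u) ?_ ?_ ?_ ?_ ?_
    · intro x hx
      exact hconjF c u x hx
    · intro x hx
      have := hconjF c u⁻¹ x hx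
      simpa using this
    · intro x _; group
    · intro x _; group
    · intro x _
      congr 1
      group
  -- scalars
  have hscal : ∀ c : κ, ∃ lam : ℂ, T c = lam • 1 := fun c => schur_scalar V (T c) (hequiv c)
  choose lam hlam using hscal
  -- trace facts
  have htraceT : ∀ c : κ, LinearMap.trace ℂ V (T c) = ∑ x ∈ F c, V.character x := by
    intro c; simp [T, FDRep.character, map_sum]
  have hinj : ∀ {x y : ℂ}, x • (1 : Module.End ℂ V) = y • (1 : Module.End ℂ V) → x = y := by
    intro x y hxy
    have := congrArg (LinearMap.trace ℂ V) hxy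
    simp only [map_smul, trace_one, smul_eq_mul] at this
    exact mul_right_cancel₀ hd this
  -- λ of the trivial class
  have hone : lam (ConjClasses.mk 1) = 1 := by
    have hF1 : F (ConjClasses.mk 1) = {1} := by
      ext x
      rw [hmemF]
      simp only [Finset.mem_singleton, ConjClasses.mk_eq_mk_iff_isConj]
      exact ⟨fun h => (isConj_one_right.mp h.symm), fun h => by rw [h]⟩
    have hT1 : T (ConjClasses.mk 1) = (1 : ℂ) • 1 := by
      simp [T, hF1, map_one]
    exact hinj ((hlam (ConjClasses.mk 1)).symm.trans hT1)
  -- structure constants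
  let cnt : κ → G → ℕ := fun d z => (((F (ConjClasses.mk b)) ×ˢ (F d)).filter
    (fun p : G × G => p.1 * p.2 = z)).card
  have hcnt_conj : ∀ (d : κ) (u z : G), cnt d (u * z * u⁻¹) = cnt d z := by
    intro d u z
    refine Finset.card_bij' (fun p _ => (u⁻¹ * p.1 * u, u⁻¹ * p.2 * u))
      (fun p _ => (u * p.1 * u⁻¹, u * p.2 * u⁻¹)) ?_ ?_ ?_ ?_
    · rintro ⟨x, y⟩ hp
      simp only [Finset.mem_filter, Finset.mem_product] at hp ⊢
      refine ⟨⟨(by simpa using hconjF _ u⁻¹ x hp.1.1), (by simpa using hconjF _ u⁻¹ y hp.1.2)⟩, ?_⟩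
      have h2 : u⁻¹ * x * u * (u⁻¹ * y * u) = u⁻¹ * (x * y) * u := by group
      rw [h2, hp.2]
      group
    · rintro ⟨x, y⟩ hp
      simp only [Finset.mem_filter, Finset.mem_product] at hp ⊢
      refine ⟨⟨hconjF _ u x hp.1.1, hconjF _ u y hp.1.2⟩, ?_⟩
      have h2 : u * x * u⁻¹ * (u * y * u⁻¹) = u * (x * y) * u⁻¹ := by group
      rw [h2, hp.2]
    · rintro ⟨x, y⟩ _; simp only [Prod.mk.injEq]; constructor <;> group
    · rintro ⟨x, y⟩ _; simp only [Prod.mk.injEq]; constructor <;> group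
  -- product of class sums expansion
  have hTT : ∀ d : κ, T (ConjClasses.mk b) * T d = ∑ z : G, (cnt d z : ℂ) • V.ρ z := by
    intro d
    have h0 : T (ConjClasses.mk b) * T d
        = ∑ p ∈ (F (ConjClasses.mk b)) ×ˢ (F d), V.ρ (p.1 * p.2) := by
      simp only [T, Finset.sum_mul_sum, ← map_mul]
      rw [Finset.sum_product]
    rw [h0, ← Finset.sum_fiberwise_of_maps_to (g := fun p : G × G => p.1 * p.2)
      (t := Finset.univ) (fun p _ => Finset.mem_univ _)]
    refine Finset.sum_congr rfl fun z _ => ?_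
    have h1 : ∀ p ∈ ((F (ConjClasses.mk b)) ×ˢ (F d)).filter (fun p : G × G => p.1 * p.2 = z),
        V.ρ (p.1 * p.2) = V.ρ z := fun p hp => by rw [(Finset.mem_filter.mp hp).2]
    rw [Finset.sum_congr rfl h1, Finset.sum_const, Nat.cast_smul_eq_nsmul]
  -- regroup by conjugacy classes
  have hregroup : ∀ d : κ, (∑ z : G, (cnt d z : ℂ) • V.ρ z)
      = ∑ e : κ, (cnt d (Quotient.out e) : ℂ) • T e := by
    intro d
    rw [← Finset.sum_fiberwise_of_maps_to (g := ConjClasses.mk) (t := Finset.univ)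
      (fun z _ => Finset.mem_univ _)]
    refine Finset.sum_congr rfl fun e _ => ?_
    have hfe : Finset.univ.filter (fun z => ConjClasses.mk z = e) = F e := by
      ext z; simp [hmemF]
    rw [hfe]
    have hcc : ∀ z ∈ F e, (cnt d z : ℂ) • V.ρ z = (cnt d (Quotient.out e) : ℂ) • V.ρ z := by
      intro z hz
      have hiz : IsConj (Quotient.out e) z := by
        rw [← ConjClasses.mk_eq_mk_iff_isConj]
        rw [(hmemF e z).mp hz]
        exact Quotient.out_eq e
      obtain ⟨u, hu⟩ := isConj_iff.mp hiz
      rw [← hu, hcnt_conj]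
    rw [Finset.sum_congr rfl hcc, ← Finset.smul_sum]
  -- the scalar relation
  have hlamrel : ∀ d : κ, lam (ConjClasses.mk b) * lam d
      = ∑ e : κ, (cnt d (Quotient.out e) : ℂ) * lam e := by
    intro d
    apply hinj
    have h1 : (lam (ConjClasses.mk b) * lam d) • (1 : Module.End ℂ V)
        = T (ConjClasses.mk b) * T d := by
      rw [hlam (ConjClasses.mk b), hlam d, smul_mul_smul_comm, mul_one]
    rw [h1, hTT d, hregroup d]
    rw [Finset.sum_smul]
    refine Finset.sum_congr rfl fun e _ => ?_
    rw [hlam e, smul_smul]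
  -- the matrix eigenvalue argument
  let Amat : Matrix κ κ ℤ := fun d e => (cnt d (Quotient.out e) : ℤ)
  let Mc : Matrix κ κ ℂ := Amat.map (algebraMap ℤ ℂ)
  have hMc : ∀ d e, Mc d e = (cnt d (Quotient.out e) : ℂ) := by
    intro d e; show algebraMap ℤ ℂ ((cnt d (Quotient.out e) : ℤ)) = _; simp
  have hmulvec : Mc.mulVec lam = lam (ConjClasses.mk b) • lam := by
    funext d
    have : Mc.mulVec lam d = ∑ e : κ, Mc d e * lam e := rfl
    rw [this]
    simp only [hMc]
    exact (hlamrel d).symm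
  have hlamne : lam ≠ 0 := by
    intro h
    have := congrFun h (ConjClasses.mk 1)
    rw [hone] at this
    exact one_ne_zero this
  have hdet : (lam (ConjClasses.mk b) • (1 : Matrix κ κ ℂ) - Mc).det = 0 :=
    Matrix.exists_mulVec_eq_zero_iff.mp ⟨lam, hlamne, by
      rw [Matrix.sub_mulVec, Matrix.smul_mulVec, Matrix.one_mulVec, hmulvec, sub_self]⟩
  refine ⟨lam (ConjClasses.mk b), ⟨Amat.charpoly, Amat.charpoly_monic, ?_⟩, ?_⟩
  · rw [eval₂_eq_eval_map]
    have hcp : Amat.charpoly.map (algebraMap ℤ ℂ) = Mc.charpoly :=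
      (Matrix.charpoly_map Amat (algebraMap ℤ ℂ)).symm
    rw [hcp, eval_charpoly', hdet]
  · -- trace identity
    have h3 := congrArg (LinearMap.trace ℂ V) (hlam (ConjClasses.mk b))
    rw [htraceT, map_smul, trace_one, smul_eq_mul] at h3
    have h4 : ∀ x ∈ F (ConjClasses.mk b), V.character x = V.character b := by
      intro x hx
      have hix : IsConj b x := by
        rw [← ConjClasses.mk_eq_mk_iff_isConj]
        exact ((hmemF _ x).mp hx).symm
      obtain ⟨u, hu⟩ := isConj_iff.mp hix
      rw [← hu, FDRep.char_conj]
    rw [Finset.sum_congr rfl h4, Finset.sum_const] at h3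
    have h5 : ((F (ConjClasses.mk b)).card : ℂ) * V.character b
        = lam (ConjClasses.mk b) * (finrank ℂ V : ℂ) := by
      rw [← nsmul_eq_mul, h3]
    exact h5


variable {G : Type} [Group G] [Fintype G]

/-- In a finite nilpotent group, elements of coprime order commute. -/
lemma commute_of_coprime_orderOf (hnil : Group.IsNilpotent G) {x y : G}
    (h : Nat.Coprime (orderOf x) (orderOf y)) : Commute x y := by
  obtain ⟨e⟩ : Nonempty ((∀ p : (Nat.card G).primeFactors, ∀ P : Sylow p G, (↑P : Subgroup G)) ≃* G) :=
    ((isNilpotent_of_finite_tfae (G := G)).out 0 4).mp hnil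
  set u := e.symm x with hu
  set v := e.symm y with hv
  have hcomp : ∀ (q : (Nat.card G).primeFactors) (P : Sylow q G),
      Commute (u q P) (v q P) := by
    intro q P
    haveI : Fact (Nat.Prime (q : ℕ)) := Fact.mk (Nat.prime_of_mem_primeFactors q.2)
    -- evaluation is a monoid hom
    let ev : (∀ p : (Nat.card G).primeFactors, ∀ P : Sylow p G, (↑P : Subgroup G)) →* (↑P : Subgroup G) :=
      { toFun := fun w => w q P, map_one' := rfl, map_mul' := fun _ _ => rfl }
    have hux : orderOf (u q P) ∣ orderOf x := by
      have h1 : orderOf (u q P) ∣ orderOf u := orderOf_map_dvd ev u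
      rwa [hu, MulEquiv.orderOf_eq e.symm x] at h1
    have hvy : orderOf (v q P) ∣ orderOf y := by
      have h1 : orderOf (v q P) ∣ orderOf v := orderOf_map_dvd ev v
      rwa [hv, MulEquiv.orderOf_eq e.symm y] at h1
    obtain ⟨k, hk⟩ := (IsPGroup.iff_orderOf.mp P.isPGroup') (u q P)
    obtain ⟨l, hl⟩ := (IsPGroup.iff_orderOf.mp P.isPGroup') (v q P)
    rcases Nat.eq_zero_or_pos k with rfl | hkpos
    · have : u q P = 1 := orderOf_eq_one_iff.mp (by rw [hk, pow_zero])
      rw [this]; exact Commute.one_left _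
    rcases Nat.eq_zero_or_pos l with rfl | hlpos
    · have : v q P = 1 := orderOf_eq_one_iff.mp (by rw [hl, pow_zero])
      rw [this]; exact Commute.one_right _
    exfalso
    have hq1 : (q : ℕ) ∣ orderOf x := dvd_trans (dvd_trans (dvd_pow_self _ hkpos.ne') hk.symm.dvd) hux
    have hq2 : (q : ℕ) ∣ orderOf y := dvd_trans (dvd_trans (dvd_pow_self _ hlpos.ne') hl.symm.dvd) hvy
    have := Nat.dvd_gcd hq1 hq2
    rw [h] at this
    exact Nat.Prime.one_lt (Nat.prime_of_mem_primeFactors q.2) |>.ne' (Nat.dvd_one.mp this)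
  have huv : u * v = v * u := by
    funext q P
    exact hcomp q P
  have h1 : x = e u := by rw [hu, MulEquiv.apply_symm_apply]
  have h2 : y = e v := by rw [hv, MulEquiv.apply_symm_apply]
  show x * y = y * x
  calc x * y = e u * e v := by rw [← h1, ← h2]
    _ = e (u * v) := (map_mul e u v).symm
    _ = e (v * u) := by rw [huv]
    _ = e v * e u := map_mul e v u
    _ = y * x := by rw [← h1, ← h2]

/-- In a finite nilpotent group, the conjugacy class of a `p'`-element has size prime to `p`. -/
lemma not_dvd_card_class (hnil : Group.IsNilpotent G) {p : ℕ} (hp : p.Prime) {b : G}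
    (hb : ¬ p ∣ orderOf b) :
    ¬ p ∣ (Set.toFinite (ConjClasses.mk b).carrier).toFinset.card := by
  classical
  haveI : Fact p.Prime := Fact.mk hp
  intro hdvd
  -- the class is the orbit of the conjugation action
  have hcard : (Set.toFinite (ConjClasses.mk b).carrier).toFinset.card
      = Nat.card (MulAction.orbit (ConjAct G) b) := by
    rw [← Nat.card_eq_card_finite_toFinset]
    rw [← ConjAct.orbit_eq_carrier_conjClasses]
  obtain ⟨P⟩ : Nonempty (Sylow p G) := Sylow.nonempty
  -- every element of P commutes with b
  have hcomm : ∀ x : G, x ∈ (P : Subgroup G) → Commute x b := by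
    intro x hx
    obtain ⟨k, hk⟩ := (IsPGroup.iff_orderOf.mp P.isPGroup') ⟨x, hx⟩
    have hox : orderOf x = p ^ k := by
      rw [← hk, Subgroup.orderOf_mk]
    refine commute_of_coprime_orderOf hnil ?_
    rw [hox]
    exact Nat.Coprime.pow_left _ ((Nat.Prime.coprime_iff_not_dvd hp).mpr hb)
  -- P maps into the stabilizer
  let S := MulAction.stabilizer (ConjAct G) b
  let P' := Subgroup.map (ConjAct.toConjAct : G ≃* ConjAct G).toMonoidHom (P : Subgroup G)
  have hP'S : P' ≤ S := by
    rintro x' ⟨x, hx, rfl⟩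
    show ConjAct.toConjAct x • b = b
    rw [ConjAct.toConjAct_smul]
    have := (hcomm x hx).eq
    rw [this]; group
  have hcardP' : Nat.card P' = p ^ (Nat.card G).factorization p := by
    rw [← P.card_eq_multiplicity]
    exact (Nat.card_congr (Subgroup.equivMapOfInjective (P : Subgroup G)
      (ConjAct.toConjAct : G ≃* ConjAct G).toMonoidHom
      (MulEquiv.injective _)).toEquiv).symm
  have hdvdS : p ^ (Nat.card G).factorization p ∣ Nat.card S := by
    rw [← hcardP']
    exact Subgroup.card_dvd_of_le hP'S
  -- orbit-stabilizer
  have horb : Nat.card (MulAction.orbit (ConjAct G) b) * Nat.card S = Nat.card (ConjAct G) := by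
    rw [Nat.card_eq_fintype_card, Nat.card_eq_fintype_card, Nat.card_eq_fintype_card]
    exact MulAction.card_orbit_mul_card_stabilizer_eq_card_group (ConjAct G) b
  have hGcard : Nat.card (ConjAct G) = Nat.card G := rfl
  rw [hcard] at hdvd
  have hfinal : p * p ^ (Nat.card G).factorization p ∣ Nat.card G := by
    have h2 := mul_dvd_mul hdvd hdvdS
    rwa [horb, hGcard] at h2
  rw [← pow_succ'] at hfinal
  exact Nat.pow_succ_factorization_not_dvd Nat.card_pos.ne' hp hfinal



/-- `p = (1 - ω) * y` for a primitive `p^(E+1)`-th root of unity `ω`, `y` an algebraic integer. -/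
lemma prime_eq_one_sub_root_mul {p : ℕ} (hp : p.Prime) {E : ℕ} {ω : ℂ}
    (hω : IsPrimitiveRoot ω (p ^ (E + 1))) :
    ∃ y : ℂ, IsIntegral ℤ y ∧ (p : ℂ) = (1 - ω) * y := by
  have hpos : 0 < p ^ (E + 1) := pow_pos hp.pos _
  have hωint : IsIntegral ℤ ω := hω.isIntegral hpos
  have hroot : (∑ i ∈ Finset.range p, (ω ^ p ^ E) ^ i) = 0 := by
    have h1 := hω.isRoot_cyclotomic hpos
    rw [Polynomial.cyclotomic_prime_pow_eq_geom_sum hp, Polynomial.IsRoot.def] at h1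
    simpa [Polynomial.eval_finset_sum] using h1
  have hp' : (p : ℂ) = ∑ i ∈ Finset.range p, (1 - (ω ^ p ^ E) ^ i) := by
    rw [Finset.sum_sub_distrib, hroot, sub_zero, Finset.sum_const, Finset.card_range,
      nsmul_eq_mul, mul_one]
  have hterm : ∀ i : ℕ, (1 - (ω ^ p ^ E) ^ i) = (1 - ω) * (∑ l ∈ Finset.range (p ^ E * i), ω ^ l) := by
    intro i
    have := geom_sum_mul ω (p ^ E * i)
    have h2 : (∑ l ∈ Finset.range (p ^ E * i), ω ^ l) * (ω - 1) = (ω ^ p ^ E) ^ i - 1 := by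
      rw [this, pow_mul]
    have h3 : (1 - ω) * (∑ l ∈ Finset.range (p ^ E * i), ω ^ l)
        = -(((∑ l ∈ Finset.range (p ^ E * i), ω ^ l)) * (ω - 1)) := by ring
    rw [h3, h2]; ring
  refine ⟨∑ i ∈ Finset.range p, ∑ l ∈ Finset.range (p ^ E * i), ω ^ l, ?_, ?_⟩
  · exact IsIntegral.sum _ (fun i _ => IsIntegral.sum _ (fun l _ => hωint.pow l))
  · rw [hp', Finset.mul_sum]
    exact Finset.sum_congr rfl (fun i _ => hterm i)

/-- `1 - ω` is not invertible among the algebraic integers. -/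
lemma not_unit_one_sub_root {p : ℕ} (hp : p.Prime) {E : ℕ} {ω : ℂ}
    (hω : IsPrimitiveRoot ω (p ^ (E + 1))) {w : ℂ} (hw : IsIntegral ℤ w)
    (h1 : (1 - ω) * w = 1) : False := by
  have hpos : 0 < p ^ (E + 1) := pow_pos hp.pos _
  obtain ⟨f, fmonic, hf⟩ := hw
  set k := f.natDegree with hk
  have hk0 : k ≠ 0 := by
    intro h0
    have : f = 1 := (Polynomial.Monic.natDegree_eq_zero fmonic).mp h0
    rw [this] at hf
    simp at hf
  -- the evaluation of f at w, multiplied by (1-ω)^k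
  have hfC : Polynomial.eval w (f.map (algebraMap ℤ ℂ)) = 0 := by
    rw [Polynomial.eval_map]; exact hf
  have hdeg : (f.map (algebraMap ℤ ℂ)).natDegree = k :=
    fmonic.natDegree_map _
  have hlead : (f.map (algebraMap ℤ ℂ)).coeff k = 1 := by
    rw [Polynomial.coeff_map]
    have := fmonic.coeff_natDegree
    rw [← hk] at this
    simp [this]
  have heval : Polynomial.eval w (f.map (algebraMap ℤ ℂ))
      = w ^ k + ∑ i ∈ Finset.range k, (f.coeff i : ℂ) * w ^ i := by
    rw [Polynomial.eval_eq_sum_range]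
    rw [hdeg, Finset.sum_range_succ, hlead, one_mul, add_comm]
    congr 1
    exact Finset.sum_congr rfl (fun i _ => by rw [Polynomial.coeff_map]; simp)
  have hkey : (1 : ℂ) + ∑ i ∈ Finset.range k, (f.coeff i : ℂ) * (1 - ω) ^ (k - i) = 0 := by
    have h2 : (1 - ω) ^ k * Polynomial.eval w (f.map (algebraMap ℤ ℂ)) = 0 := by
      rw [hfC, mul_zero]
    rw [heval, mul_add, Finset.mul_sum] at h2
    have h3 : (1 - ω) ^ k * w ^ k = 1 := by rw [← mul_pow, h1, one_pow]
    have h4 : ∀ i ∈ Finset.range k,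
        (1 - ω) ^ k * ((f.coeff i : ℂ) * w ^ i) = (f.coeff i : ℂ) * (1 - ω) ^ (k - i) := by
      intro i hi
      have hik : i ≤ k := le_of_lt (Finset.mem_range.mp hi)
      have h5 : (1 - ω) ^ k = (1 - ω) ^ (k - i) * (1 - ω) ^ i := by
        rw [← pow_add]
        congr 1
        omega
      rw [h5]
      have h6 : (1 - ω) ^ i * w ^ i = 1 := by rw [← mul_pow, h1, one_pow]
      calc (1 - ω) ^ (k - i) * (1 - ω) ^ i * ((f.coeff i : ℂ) * w ^ i)
          = (f.coeff i : ℂ) * (1 - ω) ^ (k - i) * ((1 - ω) ^ i * w ^ i) := by ring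
        _ = (f.coeff i : ℂ) * (1 - ω) ^ (k - i) := by rw [h6, mul_one]
    rw [Finset.sum_congr rfl h4, h3] at h2
    exact h2
  -- build the integer polynomial
  set gZ : Polynomial ℤ := 1 + ∑ i ∈ Finset.range k, Polynomial.C (f.coeff i) * (1 - Polynomial.X) ^ (k - i) with hgZ
  have haev : Polynomial.aeval ω gZ = 0 := by
    rw [hgZ]
    rw [map_add, map_one, map_sum]
    have : ∀ i ∈ Finset.range k,
        Polynomial.aeval ω (Polynomial.C (f.coeff i) * (1 - Polynomial.X) ^ (k - i))
          = (f.coeff i : ℂ) * (1 - ω) ^ (k - i) := by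
      intro i _
      rw [map_mul, map_pow, map_sub, map_one, Polynomial.aeval_X, Polynomial.aeval_C]
      rfl
    rw [Finset.sum_congr rfl this]
    exact hkey
  have hdvd : Polynomial.cyclotomic (p ^ (E + 1)) ℤ ∣ gZ := by
    rw [Polynomial.cyclotomic_eq_minpoly hω hpos]
    exact minpoly.isIntegrallyClosed_dvd (hω.isIntegral hpos) haev
  obtain ⟨q, hq⟩ := hdvd
  have heval1 : Polynomial.eval 1 gZ = 1 := by
    rw [hgZ]
    rw [Polynomial.eval_add, Polynomial.eval_one, Polynomial.eval_finset_sum]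
    have : ∀ i ∈ Finset.range k,
        Polynomial.eval 1 (Polynomial.C (f.coeff i) * (1 - Polynomial.X) ^ (k - i)) = 0 := by
      intro i hi
      have hik := Finset.mem_range.mp hi
      rw [Polynomial.eval_mul, Polynomial.eval_pow, Polynomial.eval_sub, Polynomial.eval_one,
        Polynomial.eval_X, sub_self]
      rw [zero_pow (by omega : k - i ≠ 0), mul_zero]
    rw [Finset.sum_congr rfl this, Finset.sum_const_zero, add_zero]
  haveI : Fact p.Prime := Fact.mk hp
  have hc : Polynomial.eval 1 (Polynomial.cyclotomic (p ^ (E + 1)) ℤ) = (p : ℤ) :=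
    Polynomial.eval_one_cyclotomic_prime_pow E
  have hdvd1 : (p : ℤ) ∣ Polynomial.eval 1 gZ := by
    rw [hq, Polynomial.eval_mul, hc]
    exact Dvd.intro _ rfl
  rw [heval1] at hdvd1
  have : (p : ℤ) ∣ 1 := hdvd1
  have := Int.le_of_dvd one_pos this
  have := hp.one_lt
  omega


end CircleAvoid

noncomputable section
open CategoryTheory LinearMap Module CircleAvoid

def IsIrredChar {G : Type} [Group G] (χ : G → ℂ) : Prop :=
  ∃ V : FDRep ℂ G, CategoryTheory.Simple V ∧ ∀ g, V.character g = χ g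

lemma real_root_eq_one {x : ℝ} (hx : 0 ≤ x) {n : ℕ} (hn : n ≠ 0) (h : x ^ n = 1) : x = 1 := by
  rcases lt_trichotomy x 1 with h1 | h1 | h1
  · have := pow_lt_one₀ hx h1 hn
    rw [h] at this
    exact absurd this (lt_irrefl 1)
  · exact h1
  · have := one_lt_pow₀ h1 hn
    rw [h] at this
    exact absurd this (lt_irrefl 1)

/-- Finite nilpotent groups are circle-avoiding: if an irreducible character value has
absolute value `1`, the character is linear. -/
theorem nilpotent_circle_avoiding
    (G : Type) [Group G] [Fintype G] (hnil : Group.IsNilpotent G)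
    (χ : G → ℂ) (hχ : IsIrredChar χ) (g : G) (habs : ‖χ g‖ = 1) :
    χ 1 = 1 := by
  classical
  obtain ⟨V, hsimp, hval⟩ := hχ
  haveI := hsimp
  rw [← hval g] at habs
  have hχ1 : χ 1 = (finrank ℂ V : ℂ) := by rw [← hval 1, FDRep.char_one]
  -- the module is nontrivial
  have hnontriv : Nontrivial V := by
    by_contra hsub
    rw [not_nontrivial_iff_subsingleton] at hsub
    have hS : Subsingleton ((V : Type) →ₗ[ℂ] (V : Type)) := inferInstance
    have h0 : (𝟙 V : V ⟶ V) = 0 :=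
      Action.hom_ext _ _ (by ext x; exact Subsingleton.elim _ _)
    exact (CategoryTheory.id_nonzero V) h0
  set d := finrank ℂ V with hd
  have hdpos : 0 < d := finrank_pos
  by_cases hd1 : d = 1
  · rw [hχ1, hd1]; norm_num
  exfalso
  set p := d.minFac with hp'
  have hp : p.Prime := Nat.minFac_prime hd1
  have hpd : p ∣ d := Nat.minFac_dvd d
  set m := orderOf g with hm
  have hm0 : m ≠ 0 := (orderOf_pos g).ne'
  set e := m.factorization p with he
  set m' := m / p ^ e with hm'
  have hmm : p ^ e * m' = m := Nat.ordProj_mul_ordCompl_eq_self m p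
  have hpm' : ¬ p ∣ m' := Nat.not_dvd_ordCompl hp hm0
  have hm'pos : 0 < m' := Nat.ordCompl_pos p hm0
  have hcop : Nat.Coprime (p ^ e) m' :=
    Nat.Coprime.pow_left _ ((Nat.Prime.coprime_iff_not_dvd hp).mpr hpm')
  obtain ⟨α, β, hαβ⟩ := Nat.isCoprime_iff_coprime.mpr hcop
  set a := g ^ (β * (m' : ℤ)) with ha
  set b := g ^ (α * ((p ^ e : ℕ) : ℤ)) with hb
  have hzpow : ∀ k : ℤ, (m : ℤ) ∣ k → g ^ k = 1 := by
    rintro k ⟨c, rfl⟩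
    rw [zpow_mul]
    have hgm : g ^ (m : ℤ) = 1 := by
      rw [zpow_natCast, hm, pow_orderOf_eq_one]
    rw [hgm, one_zpow]
  have hab : a * b = g := by
    rw [ha, hb, ← zpow_add]
    have hsum : β * (m' : ℤ) + α * ((p ^ e : ℕ) : ℤ) = 1 := by linarith [hαβ]
    rw [hsum, zpow_one]
  have hba : b * a = g := by
    rw [hb, ha, ← zpow_add]
    have hsum : α * ((p ^ e : ℕ) : ℤ) + β * (m' : ℤ) = 1 := by linarith [hαβ]
    rw [hsum, zpow_one]
  have hae : a ^ (p ^ e) = 1 := by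
    rw [ha, ← zpow_natCast, ← zpow_mul]
    refine hzpow _ ⟨β, ?_⟩
    push_cast [← hmm]
    ring
  have hbe : b ^ m' = 1 := by
    rw [hb, ← zpow_natCast, ← zpow_mul]
    refine hzpow _ ⟨α, ?_⟩
    push_cast [← hmm]
    ring
  have hob : ¬ p ∣ orderOf b := fun hpb =>
    hpm' (dvd_trans hpb (orderOf_dvd_of_pow_eq_one hbe))
  set A := V.ρ a with hA'
  set B := V.ρ b with hB'
  have hcommAB : Commute A B := by
    show A * B = B * A
    rw [hA', hB', ← map_mul, ← map_mul, hab, hba]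
  have hA1 : A ^ (p ^ e) = 1 := by rw [hA', ← map_pow, hae, map_one]
  have hB1 : B ^ m' = 1 := by rw [hB', ← map_pow, hbe, map_one]
  obtain ⟨s, t, hroots, hint, _, htrace⟩ := master A B hcommAB hA1
  have hχg : V.character g = ∑ μ ∈ s, μ * t μ := by
    have h1 : V.character g = LinearMap.trace ℂ V (A ^ 1 * B) := by
      rw [pow_one, hA', hB', ← map_mul, hab]; rfl
    rw [h1, htrace 1]
    exact Finset.sum_congr rfl fun μ _ => by rw [pow_one]
  have hχb : V.character b = ∑ μ ∈ s, t μ := by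
    have h1 : V.character b = LinearMap.trace ℂ V (A ^ 0 * B) := by
      rw [pow_zero, one_mul]; rfl
    rw [h1, htrace 0]
    exact Finset.sum_congr rfl fun μ _ => by rw [pow_zero, one_mul]
  have hints : ∀ μ ∈ s, IsIntegral ℤ (t μ) := hint m' hm'pos hB1
  -- the root of unity ω
  set E := max e 1 with hE'
  have hE : E = (E - 1) + 1 := by omega
  have hpE0 : p ^ E ≠ 0 := pow_ne_zero _ hp.pos.ne'
  set ω := Complex.exp (2 * Real.pi * Complex.I / (p ^ E : ℕ)) with hω'
  have hωprim : IsPrimitiveRoot ω (p ^ E) := Complex.isPrimitiveRoot_exp _ hpE0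
  have hωint : IsIntegral ℤ ω := hωprim.isIntegral (Nat.pos_of_ne_zero hpE0)
  have hμfact : ∀ μ ∈ s, ∃ c : ℂ, IsIntegral ℤ c ∧ μ - 1 = (1 - ω) * c := by
    intro μ hμ
    have hμE : μ ^ (p ^ E) = 1 := by
      have h1 := hroots μ hμ
      have h2 : p ^ E = p ^ e * p ^ (E - e) := by
        rw [← pow_add]
        congr 1
        omega
      rw [h2, pow_mul, h1, one_pow]
    haveI : NeZero (p ^ E) := ⟨hpE0⟩
    obtain ⟨i, hi, hωi⟩ := hωprim.eq_pow_of_pow_eq_one hμE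
    refine ⟨-(∑ l ∈ Finset.range i, ω ^ l), ?_, ?_⟩
    · exact (IsIntegral.sum _ fun l _ => hωint.pow l).neg
    · rw [← hωi]
      have h3 := geom_sum_mul ω i
      linear_combination -h3
  have hdiff : ∃ x : ℂ, IsIntegral ℤ x ∧ V.character g - V.character b = (1 - ω) * x := by
    choose! c hc1 hc2 using hμfact
    refine ⟨∑ μ ∈ s, c μ * t μ,
      IsIntegral.sum _ (fun μ hμ => (hc1 μ hμ).mul (hints μ hμ)), ?_⟩
    rw [hχg, hχb, ← Finset.sum_sub_distrib, Finset.mul_sum]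
    refine Finset.sum_congr rfl fun μ hμ => ?_
    have h4 := hc2 μ hμ
    calc μ * t μ - t μ = (μ - 1) * t μ := by ring
      _ = ((1 - ω) * c μ) * t μ := by rw [h4]
      _ = (1 - ω) * (c μ * t μ) := by ring
  obtain ⟨x, hxint, hxeq⟩ := hdiff
  -- class sum at b
  have hdne : ((d : ℕ) : ℂ) ≠ 0 := Nat.cast_ne_zero.mpr hdpos.ne'
  obtain ⟨lam, hlamint, hlameq⟩ := class_sum_scalar V hdne b
  set N := (Set.toFinite (ConjClasses.mk b).carrier).toFinset.card with hN'
  have hpN : ¬ p ∣ N := not_dvd_card_class hnil hp hob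
  -- χ(g⁻¹) is an algebraic integer
  have hginv : (V.ρ g⁻¹) ^ m = 1 := by
    rw [← map_pow, inv_pow, hm, pow_orderOf_eq_one, inv_one, map_one]
  have hinvint : IsIntegral ℤ (V.character g⁻¹) :=
    trace_isIntegral (V.ρ g⁻¹) (Nat.pos_of_ne_zero hm0) hginv
  -- χ(g) * χ(g⁻¹) = 1
  have hgpow : (V.ρ g) ^ m = 1 := by rw [← map_pow, hm, pow_orderOf_eq_one, map_one]
  obtain ⟨s2, t2, hroots2, _, hreal2, htrace2⟩ :=
    master (V.ρ g) 1 (Commute.one_right _) hgpow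
  have hχg2 : V.character g = ∑ μ ∈ s2, μ * t2 μ := by
    have h1 : V.character g = LinearMap.trace ℂ V ((V.ρ g) ^ 1 * 1) := by
      rw [pow_one, mul_one]; rfl
    rw [h1, htrace2 1]
    exact Finset.sum_congr rfl fun μ _ => by rw [pow_one]
  have hm1 : g ^ (m - 1) = g⁻¹ := by
    refine eq_inv_of_mul_eq_one_left ?_
    rw [← pow_succ]
    have : m - 1 + 1 = m := by omega
    rw [this, hm, pow_orderOf_eq_one]
  have hχginv2 : V.character g⁻¹ = ∑ μ ∈ s2, μ ^ (m - 1) * t2 μ := by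
    have h1 : V.character g⁻¹ = LinearMap.trace ℂ V ((V.ρ g) ^ (m - 1) * 1) := by
      rw [mul_one, ← map_pow, hm1]; rfl
    rw [h1, htrace2 (m - 1)]
  have hconj : (starRingEnd ℂ) (V.character g) = V.character g⁻¹ := by
    rw [hχg2, hχginv2, map_sum]
    refine Finset.sum_congr rfl fun μ hμ => ?_
    have hμm : μ ^ m = 1 := hroots2 μ hμ
    have hμne : μ ≠ 0 := by
      intro h0
      rw [h0, zero_pow hm0] at hμm
      exact zero_ne_one hμm
    have habs1 : ‖μ‖ = 1 := by
      refine real_root_eq_one (norm_nonneg μ) hm0 ?_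
      rw [← norm_pow, hμm, norm_one]
    have hconjμ : (starRingEnd ℂ) μ = μ ^ (m - 1) := by
      have h2 : μ * (starRingEnd ℂ) μ = 1 := by
        rw [Complex.mul_conj]
        norm_cast
        rw [← Complex.sq_norm, habs1, one_pow]
      have h3 : μ * μ ^ (m - 1) = 1 := by
        rw [← pow_succ']
        have : m - 1 + 1 = m := by omega
        rw [this, hμm]
      have h4 : (starRingEnd ℂ) μ = μ⁻¹ := by
        field_simp at h2 ⊢
        linear_combination h2
      have h5 : μ ^ (m - 1) = μ⁻¹ := by
        field_simp at h3 ⊢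
        linear_combination h3
      rw [h4, h5]
    obtain ⟨k, hk⟩ := hreal2 rfl μ hμ
    rw [map_mul, hconjμ, hk]
    congr 1
    simp
  have hmul1 : V.character g * V.character g⁻¹ = 1 := by
    rw [← hconj, Complex.mul_conj]
    norm_cast
    rw [← Complex.sq_norm, habs, one_pow]
  -- p = (1 - ω) * y
  obtain ⟨y, hyint, hyeq⟩ := prime_eq_one_sub_root_mul hp (E := E - 1) (by rw [← hE]; exact hωprim)
  -- N = (1 - ω) * Z
  obtain ⟨d1, hd1eq⟩ := hpd
  have hNeq : ∃ Z : ℂ, IsIntegral ℤ Z ∧ (N : ℂ) = (1 - ω) * Z := by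
    refine ⟨y * (lam * ((d1 : ℂ) * V.character g⁻¹)) + (N : ℂ) * x * V.character g⁻¹, ?_, ?_⟩
    · refine IsIntegral.add ?_ ?_
      · exact hyint.mul (hlamint.mul ((CircleAvoid.natCast_isIntegral d1).mul hinvint))
      · exact ((CircleAvoid.natCast_isIntegral N).mul hxint).mul hinvint
    · have hstep1 : (N : ℂ) = (N : ℂ) * (V.character g * V.character g⁻¹) := by
        rw [hmul1, mul_one]
      have hstep2 : V.character g = V.character b + (1 - ω) * x := by
        rw [← hxeq]; ring
      have hstep3 : ((d : ℕ) : ℂ) = (p : ℂ) * (d1 : ℂ) := by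
        rw [hd1eq]; push_cast; ring
      calc (N : ℂ) = (N : ℂ) * (V.character g * V.character g⁻¹) := hstep1
        _ = ((N : ℂ) * V.character b) * V.character g⁻¹
            + (1 - ω) * ((N : ℂ) * x * V.character g⁻¹) := by rw [hstep2]; ring
        _ = (lam * ((d : ℕ) : ℂ)) * V.character g⁻¹
            + (1 - ω) * ((N : ℂ) * x * V.character g⁻¹) := by rw [hlameq]
        _ = (1 - ω) * (y * (lam * ((d1 : ℂ) * V.character g⁻¹)))
            + (1 - ω) * ((N : ℂ) * x * V.character g⁻¹) := by
              rw [hstep3, hyeq]; ring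
        _ = (1 - ω) * (y * (lam * ((d1 : ℂ) * V.character g⁻¹))
            + (N : ℂ) * x * V.character g⁻¹) := by ring
  obtain ⟨Z, hZint, hZeq⟩ := hNeq
  -- combine with coprimality
  obtain ⟨u', v', huv⟩ := Nat.isCoprime_iff_coprime.mpr
    ((Nat.Prime.coprime_iff_not_dvd hp).mpr hpN)
  have hfin : (1 - ω) * ((u' : ℂ) * y + (v' : ℂ) * Z) = 1 := by
    have hcast : ((u' : ℂ) * (p : ℂ) + (v' : ℂ) * (N : ℂ)) = 1 := by
      have := congrArg (fun z : ℤ => (z : ℂ)) huv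
      push_cast at this
      linear_combination this
    calc (1 - ω) * ((u' : ℂ) * y + (v' : ℂ) * Z)
        = (u' : ℂ) * ((1 - ω) * y) + (v' : ℂ) * ((1 - ω) * Z) := by ring
      _ = (u' : ℂ) * (p : ℂ) + (v' : ℂ) * (N : ℂ) := by rw [← hyeq, ← hZeq]
      _ = 1 := hcast
  have hwint : IsIntegral ℤ ((u' : ℂ) * y + (v' : ℂ) * Z) := by
    have hu : IsIntegral ℤ ((u' : ℂ)) := by
      have : ((u' : ℤ) : ℂ) = algebraMap ℤ ℂ u' := rfl
      rw [this]; exact isIntegral_algebraMap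
    have hv : IsIntegral ℤ ((v' : ℂ)) := by
      have : ((v' : ℤ) : ℂ) = algebraMap ℤ ℂ v' := rfl
      rw [this]; exact isIntegral_algebraMap
    exact (hu.mul hyint).add (hv.mul hZint)
  exact not_unit_one_sub_root hp (E := E - 1) (by rw [← hE]; exact hωprim) hwint hfin
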